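/- arXiv:1204.1104 — 4 statements merged into one kernel-verified Lean document; each statement's English description precedes it below -/
import Mathlib

section
/- Let A be a complete normed ring, let X, Y ∈ A with ‖X‖ < 1, and fix m ∈ ℕ. Then the family indexed by tuples (k_0, k_1, …, k_m) ∈ ℕ^{m+1} whose member is the product X^{k_0} Y X^{k_1} Y ⋯ Y X^{k_m} (with exactly m factors Y interleaved between the powers of X) is summable, and its sum equals ((1−X)^{-1} Y)^m (1−X)^{-1}. -/
set_option maxHeartbeats 1000000

private lemma interleaved_cons_key {A : Type*} [NormedRing A] (X Y : A) (m : ℕ)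
    (n : ℕ) (k : Fin (m + 1) → ℕ) :
    X ^ (Fin.cons n k : Fin (m + 2) → ℕ) 0 *
        (List.ofFn fun i : Fin (m + 1) => Y * X ^ (Fin.cons n k : Fin (m + 2) → ℕ) i.succ).prod
      = (X ^ n * Y) * (X ^ k 0 * (List.ofFn fun i : Fin m => Y * X ^ k i.succ).prod) := by
  simp [List.ofFn_succ, Fin.cons_zero, Fin.cons_succ, mul_assoc]

private lemma interleaved_summable_norm {A : Type*} [NormedRing A] [CompleteSpace A]
    (X Y : A) (hX : ‖X‖ < 1) : ∀ m : ℕ,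
    Summable (fun k : Fin (m + 1) → ℕ =>
      ‖X ^ k 0 * (List.ofFn fun i : Fin m => Y * X ^ k i.succ).prod‖) := by
  have hXn : Summable (fun n : ℕ => ‖X ^ n‖) := by
    refine (summable_nat_add_iff 1).mp ?_
    refine Summable.of_nonneg_of_le (fun _ => norm_nonneg _)
      (fun n => norm_pow_le' X n.succ_pos)
      ((summable_nat_add_iff 1).mpr (summable_geometric_of_lt_one (norm_nonneg X) hX))
  have hXY : Summable (fun n : ℕ => ‖X ^ n * Y‖) :=
    Summable.of_nonneg_of_le (fun _ => norm_nonneg _)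
      (fun n => norm_mul_le _ _) (hXn.mul_right ‖Y‖)
  intro m
  induction m with
  | zero =>
    refine ((Equiv.funUnique (Fin 1) ℕ).symm.summable_iff).mp ?_
    simpa [Function.comp_def, uniqueElim_const] using hXn
  | succ m ih =>
    refine ((Fin.consEquiv fun _ : Fin (m + 2) => ℕ).summable_iff).mp ?_
    have hprod : Summable (fun p : ℕ × (Fin (m + 1) → ℕ) =>
        ‖X ^ p.1 * Y‖ *
          ‖X ^ p.2 0 * (List.ofFn fun i : Fin m => Y * X ^ p.2 i.succ).prod‖) :=
      hXY.mul_of_nonneg ih (fun _ => norm_nonneg _) (fun _ => norm_nonneg _)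
    refine Summable.of_nonneg_of_le (fun _ => norm_nonneg _) (fun p => ?_) hprod
    simp only [Function.comp_apply, Fin.consEquiv_apply]
    rw [interleaved_cons_key X Y m p.1 p.2]
    exact norm_mul_le _ _

/-- Rearrangement identity (2.7)–(2.8): for `‖X‖ < 1` and any `m`, the family
`X^{k₀} Y X^{k₁} Y ⋯ Y X^{kₘ}` indexed by `(k₀,…,kₘ) ∈ ℕ^{m+1}` is summable with sum
`((1-X)⁻¹ Y)^m (1-X)⁻¹`. -/
theorem interleaved_neumann_sum {A : Type*} [NormedRing A] [CompleteSpace A] (X Y : A)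
    (hX : ‖X‖ < 1) (m : ℕ) :
    HasSum
      (fun k : Fin (m + 1) → ℕ =>
        X ^ k 0 * (List.ofFn fun i : Fin m => Y * X ^ k i.succ).prod)
      ((Ring.inverse (1 - X) * Y) ^ m * Ring.inverse (1 - X)) := by
  have hXn : Summable (fun n : ℕ => ‖X ^ n‖) := by
    refine (summable_nat_add_iff 1).mp ?_
    refine Summable.of_nonneg_of_le (fun _ => norm_nonneg _)
      (fun n => norm_pow_le' X n.succ_pos)
      ((summable_nat_add_iff 1).mpr (summable_geometric_of_lt_one (norm_nonneg X) hX))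
  have hXY : Summable (fun n : ℕ => ‖X ^ n * Y‖) :=
    Summable.of_nonneg_of_le (fun _ => norm_nonneg _)
      (fun n => norm_mul_le _ _) (hXn.mul_right ‖Y‖)
  induction m with
  | zero =>
    rw [pow_zero, one_mul]
    refine ((Equiv.funUnique (Fin 1) ℕ).symm.hasSum_iff).mp ?_
    simpa [Function.comp_def, uniqueElim_const] using hasSum_geom_series_inverse X hX
  | succ m ih =>
    have h1 : HasSum (fun n : ℕ => X ^ n * Y) (Ring.inverse (1 - X) * Y) :=
      (hasSum_geom_series_inverse X hX).mul_right Y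
    have hsum : Summable (fun p : ℕ × (Fin (m + 1) → ℕ) =>
        (X ^ p.1 * Y) *
          (X ^ p.2 0 * (List.ofFn fun i : Fin m => Y * X ^ p.2 i.succ).prod)) :=
      summable_mul_of_summable_norm (f := fun n : ℕ => X ^ n * Y)
        (g := fun k : Fin (m + 1) → ℕ =>
          X ^ k 0 * (List.ofFn fun i : Fin m => Y * X ^ k i.succ).prod)
        hXY (interleaved_summable_norm X Y hX m)
    have h2 := h1.mul ih hsum
    refine ((Fin.consEquiv fun _ : Fin (m + 2) => ℕ).hasSum_iff).mp ?_
    have heq : (fun k : Fin (m + 2) → ℕ =>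
          X ^ k 0 * (List.ofFn fun i : Fin (m + 1) => Y * X ^ k i.succ).prod) ∘
          (Fin.consEquiv fun _ : Fin (m + 2) => ℕ)
        = fun p : ℕ × (Fin (m + 1) → ℕ) =>
          (X ^ p.1 * Y) *
            (X ^ p.2 0 * (List.ofFn fun i : Fin m => Y * X ^ p.2 i.succ).prod) := by
      funext p
      simp only [Function.comp_apply, Fin.consEquiv_apply]
      exact interleaved_cons_key X Y m p.1 p.2
    rw [heq, pow_succ', mul_assoc]
    exact h2
end

section
/- Fix d ≥ 1 and let P, Q, R, ζ' be d×d real matrices with ‖R‖ < 1, ‖(I−R)^{-1} Q ζ'‖ < 1, and Q ζ' invertible, and suppose both ζ' and ζ := (I − Q ζ' − R)^{-1} P have all row sums equal to 1 (ζ'·𝟙 = 𝟙 and ζ·𝟙 = 𝟙). Then ∑_{m=1}^∞ m · ((I−R)^{-1} Q ζ')^m (I−R)^{-1} P 𝟙 = (I − Q ζ' − R)^{-1} Q 𝟙. -/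
open Matrix

attribute [local instance] Matrix.linftyOpNormedRing Matrix.linftyOpNormedSpace

open Filter Finset

/-- Key matrix-level sum: `∑ m • (B^m (1-B)) = (1-B)⁻¹ B` for `‖B‖ < 1`. -/
lemma hasSum_nsmul_geom_mul {d : ℕ} (B : Matrix (Fin d) (Fin d) ℝ) (hB : ‖B‖ < 1) :
    HasSum (fun m : ℕ => m • (B ^ m * (1 - B))) ((1 - B)⁻¹ * B) := by
  have hBn : ‖(‖B‖)‖ < 1 := by rwa [Real.norm_eq_abs, abs_of_nonneg (norm_nonneg B)]
  have hg : Summable (fun m : ℕ => (m : ℝ) * ‖B‖ ^ m) := by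
    simpa [pow_one] using summable_pow_mul_geometric_of_norm_lt_one (R := ℝ) 1 hBn
  have hbound : ∀ m : ℕ, ‖m • (B ^ m * (1 - B))‖ ≤ (m : ℝ) * ‖B‖ ^ m * ‖1 - B‖ := by
    intro m
    rcases Nat.eq_zero_or_pos m with h0 | hm
    · simp [h0]
    calc ‖m • (B ^ m * (1 - B))‖ ≤ m * ‖B ^ m * (1 - B)‖ := norm_nsmul_le
      _ ≤ m * (‖B ^ m‖ * ‖1 - B‖) := by gcongr; exact norm_mul_le _ _
      _ ≤ (m : ℝ) * ‖B‖ ^ m * ‖1 - B‖ := by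
          rw [mul_assoc]; gcongr; exact norm_pow_le' B hm
  have hnorm : Summable (fun m : ℕ => ‖m • (B ^ m * (1 - B))‖) :=
    Summable.of_nonneg_of_le (fun m => norm_nonneg _) hbound (hg.mul_right _)
  refine (hasSum_iff_tendsto_nat_of_summable_norm hnorm).mpr ?_
  -- partial sums: ∑_{m<N} m•(B^m - B^{m+1}) = ∑_{m<N} B^{m+1} - N • B^N
  have hps : ∀ N : ℕ, ∑ m ∈ range N, m • (B ^ m * (1 - B))
      = (∑ m ∈ range N, B ^ (m + 1)) - N • B ^ N := by
    intro N
    have : ∀ m : ℕ, m • (B ^ m * (1 - B))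
        = (m • B ^ m - (m + 1) • B ^ (m + 1)) + B ^ (m + 1) := by
      intro m
      rw [mul_sub, mul_one, smul_sub, ← pow_succ, add_smul, one_smul]
      abel
    rw [Finset.sum_congr rfl (fun m _ => this m), Finset.sum_add_distrib,
      Finset.sum_range_sub' (fun m => m • B ^ m)]
    simp only [zero_smul, zero_sub]
    abel
  simp only [hps]
  have h1 : Tendsto (fun N : ℕ => ∑ m ∈ range N, B ^ (m + 1)) atTop
      (nhds (Ring.inverse (1 - B) - 1)) := by
    have := (hasSum_geom_series_inverse B hB)
    have h2 : HasSum (fun m : ℕ => B ^ (m + 1)) (Ring.inverse (1 - B) - 1) := by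
      have := (hasSum_nat_add_iff' (f := fun n : ℕ => B ^ n) 1).mpr this
      simpa using this
    exact h2.tendsto_sum_nat
  have h2 : Tendsto (fun N : ℕ => N • B ^ N) atTop (nhds 0) := by
    apply squeeze_zero_norm (a := fun N : ℕ => (N : ℝ) * ‖B‖ ^ N) ?_ hg.tendsto_atTop_zero
    intro N
    rcases Nat.eq_zero_or_pos N with h0 | hN
    · simp [h0]
    calc ‖N • B ^ N‖ ≤ N * ‖B ^ N‖ := norm_nsmul_le
      _ ≤ (N : ℝ) * ‖B‖ ^ N := by gcongr; exact norm_pow_le' B hN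
  have := h1.sub h2
  rw [sub_zero] at this
  convert this using 2
  · rfl
  rw [Matrix.nonsing_inv_eq_ringInverse]
  have hU : IsUnit (1 - B) := isUnit_one_sub_of_norm_lt_one hB
  have hinv : Ring.inverse (1 - B) * (1 - B) = 1 := Ring.inverse_mul_cancel _ hU
  calc Ring.inverse (1 - B) * B
      = Ring.inverse (1 - B) * 1 - Ring.inverse (1 - B) * (1 - B) := by
        rw [mul_one, mul_sub, mul_one]; abel
    _ = Ring.inverse (1 - B) - 1 := by rw [hinv, mul_one]

/-- Formula (2.17): the conditional expectation of `|U_n|` equals `A_n 𝟙`, i.e.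
`∑_{m=1}^∞ m ((I-R)⁻¹ Q ζ')^m (I-R)⁻¹ P 𝟙 = (I - Q ζ' - R)⁻¹ Q 𝟙`. -/
theorem conditional_mean_U (d : ℕ) (hd : 1 ≤ d) (P Q R ζ' : Matrix (Fin d) (Fin d) ℝ)
    (hR : ‖R‖ < 1) (hQζ : ‖(1 - R)⁻¹ * (Q * ζ')‖ < 1) (hQ : IsUnit (Q * ζ'))
    (hζ' : ζ' *ᵥ (1 : Fin d → ℝ) = 1)
    (hζ : ((1 - Q * ζ' - R)⁻¹ * P) *ᵥ (1 : Fin d → ℝ) = 1) :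
    HasSum
      (fun m : ℕ =>
        m • ((((1 - R)⁻¹ * (Q * ζ')) ^ m * (1 - R)⁻¹ * P) *ᵥ (1 : Fin d → ℝ)))
      (((1 - Q * ζ' - R)⁻¹ * Q) *ᵥ (1 : Fin d → ℝ)) := by
  set B := (1 - R)⁻¹ * (Q * ζ') with hBdef
  have hUR : IsUnit (1 - R) := isUnit_one_sub_of_norm_lt_one hR
  have hUB : IsUnit (1 - B) := isUnit_one_sub_of_norm_lt_one hQζ
  have hRinv : (1 - R) * (1 - R)⁻¹ = 1 :=
    Matrix.mul_nonsing_inv _ ((Matrix.isUnit_iff_isUnit_det _).mp hUR)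
  have hBinv : (1 - B) * (1 - B)⁻¹ = 1 :=
    Matrix.mul_nonsing_inv _ ((Matrix.isUnit_iff_isUnit_det _).mp hUB)
  -- factorization
  have hfact : 1 - Q * ζ' - R = (1 - R) * (1 - B) := by
    have h : (1 - R) * B = Q * ζ' := by
      rw [hBdef, ← mul_assoc, hRinv, one_mul]
    rw [mul_sub, mul_one, h]
    abel
  have hinv : (1 - Q * ζ' - R)⁻¹ = (1 - B)⁻¹ * (1 - R)⁻¹ := by
    rw [hfact, Matrix.mul_inv_rev]
  -- v = (1-R)⁻¹ P 𝟙 = (1-B) 𝟙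
  have hv : ((1 - R)⁻¹ * P) *ᵥ (1 : Fin d → ℝ) = (1 - B) *ᵥ (1 : Fin d → ℝ) := by
    have h := congrArg (fun x => (1 - B) *ᵥ x) hζ
    simp only [hinv, Matrix.mulVec_mulVec] at h ⊢
    rw [← mul_assoc, ← mul_assoc, hBinv, one_mul] at h
    exact h
  -- target rewriting
  have htarget : ((1 - Q * ζ' - R)⁻¹ * Q) *ᵥ (1 : Fin d → ℝ)
      = ((1 - B)⁻¹ * B) *ᵥ (1 : Fin d → ℝ) := by
    rw [hinv]
    have : Q *ᵥ (1 : Fin d → ℝ) = (Q * ζ') *ᵥ (1 : Fin d → ℝ) := by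
      rw [← Matrix.mulVec_mulVec, hζ']
    calc ((1 - B)⁻¹ * (1 - R)⁻¹ * Q) *ᵥ (1 : Fin d → ℝ)
        = ((1 - B)⁻¹ * (1 - R)⁻¹) *ᵥ (Q *ᵥ (1 : Fin d → ℝ)) := by
          rw [Matrix.mulVec_mulVec, mul_assoc]
      _ = ((1 - B)⁻¹ * (1 - R)⁻¹) *ᵥ ((Q * ζ') *ᵥ (1 : Fin d → ℝ)) := by rw [this]
      _ = ((1 - B)⁻¹ * B) *ᵥ (1 : Fin d → ℝ) := by
          rw [Matrix.mulVec_mulVec, mul_assoc]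
  rw [htarget]
  -- the continuous linear map M ↦ M *ᵥ 𝟙
  let L : Matrix (Fin d) (Fin d) ℝ →L[ℝ] (Fin d → ℝ) :=
    LinearMap.toContinuousLinearMap
      { toFun := fun M => M *ᵥ (1 : Fin d → ℝ)
        map_add' := fun A B => Matrix.add_mulVec A B 1
        map_smul' := fun c A => by simp [Matrix.smul_mulVec] }
  have hmat := (hasSum_nsmul_geom_mul B hQζ).mapL L
  have hterm : ∀ m : ℕ, L (m • (B ^ m * (1 - B)))
      = m • ((B ^ m * (1 - R)⁻¹ * P) *ᵥ (1 : Fin d → ℝ)) := by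
    intro m
    rw [map_nsmul]
    congr 1
    show (B ^ m * (1 - B)) *ᵥ (1 : Fin d → ℝ) = _
    rw [← Matrix.mulVec_mulVec, ← hv, mul_assoc, Matrix.mulVec_mulVec]
  have hL : L ((1 - B)⁻¹ * B) = ((1 - B)⁻¹ * B) *ᵥ (1 : Fin d → ℝ) := rfl
  rw [hL] at hmat
  simpa only [funext hterm] using hmat
end

section
/- Fix d ≥ 1 and let P, Q, R, ζ' be d×d real matrices such that I − Q ζ' is invertible, ‖(I − Q ζ')^{-1} R‖ < 1 (L∞ operator norm), and ζ := (I − Q ζ' − R)^{-1} P satisfies ζ·𝟙 = 𝟙. Then ∑_{K=1}^∞ K · ((I − Q ζ')^{-1} R)^K (I − Q ζ')^{-1} P 𝟙 = (I − Q ζ' − R)^{-1} R 𝟙. -/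
open Matrix

attribute [local instance] Matrix.linftyOpNormedRing
attribute [local instance] Matrix.linftyOpNormedAlgebra

/-- Formula (2.18): the conditional expectation of the lateral step count `|Z_n|` equals
`(I - Q ζ' - R)⁻¹ R 𝟙`, i.e.
`∑_{K=1}^∞ K ((I - Q ζ')⁻¹ R)^K (I - Q ζ')⁻¹ P 𝟙 = (I - Q ζ' - R)⁻¹ R 𝟙`. -/
theorem conditional_mean_Z (d : ℕ) (hd : 1 ≤ d) (P Q R ζ' : Matrix (Fin d) (Fin d) ℝ)
    (hinv : IsUnit (1 - Q * ζ')) (hR : ‖(1 - Q * ζ')⁻¹ * R‖ < 1)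
    (hζ : ((1 - Q * ζ' - R)⁻¹ * P) *ᵥ (1 : Fin d → ℝ) = 1) :
    HasSum
      (fun K : ℕ =>
        K • ((((1 - Q * ζ')⁻¹ * R) ^ K * (1 - Q * ζ')⁻¹ * P) *ᵥ (1 : Fin d → ℝ)))
      (((1 - Q * ζ' - R)⁻¹ * R) *ᵥ (1 : Fin d → ℝ)) := by
  haveI : CompleteSpace (Matrix (Fin d) (Fin d) ℝ) := FiniteDimensional.complete ℝ _
  set M : Matrix (Fin d) (Fin d) ℝ := (1 - Q * ζ')⁻¹ * R with hM
  set A : Matrix (Fin d) (Fin d) ℝ := (1 - Q * ζ')⁻¹ * P with hA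
  set N : Matrix (Fin d) (Fin d) ℝ := Ring.inverse (1 - M) with hN
  have hdet : IsUnit (1 - Q * ζ').det := (Matrix.isUnit_iff_isUnit_det _).mp hinv
  have h1M : IsUnit (1 - M) := isUnit_one_sub_of_norm_lt_one hR
  -- commutation of M with N
  obtain ⟨u, hu⟩ := id h1M
  have hNu : N = ↑u⁻¹ := by rw [hN, ← hu, Ring.inverse_unit]
  have hcommMu : Commute M (↑u : Matrix (Fin d) (Fin d) ℝ) := by
    rw [hu]; exact ((Commute.one_right M).sub_right (Commute.refl M))
  have hcomm : Commute M N := by rw [hNu]; exact hcommMu.units_inv_right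
  have hNN : N * (1 - M) = 1 := by rw [hN, Ring.inverse_mul_cancel _ h1M]
  have hNN' : (1 - M) * N = 1 := by rw [hN, Ring.mul_inverse_cancel _ h1M]
  -- factorization
  have hfact : 1 - Q * ζ' - R = (1 - Q * ζ') * (1 - M) := by
    rw [mul_sub, mul_one, hM, Matrix.mul_nonsing_inv_cancel_left _ _ hdet]
  have hinvfact : (1 - Q * ζ' - R)⁻¹ = N * (1 - Q * ζ')⁻¹ := by
    rw [hfact, Matrix.mul_inv_rev, Matrix.nonsing_inv_eq_ringInverse (1 - M), hN]
  -- from hζ : A *ᵥ 1 = (1 - M) *ᵥ 1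
  have h1 : (N * A) *ᵥ (1 : Fin d → ℝ) = 1 := by
    rw [hinvfact, mul_assoc, ← hA] at hζ; exact hζ
  have hζ' : A *ᵥ (1 : Fin d → ℝ) = (1 - M) *ᵥ (1 : Fin d → ℝ) := by
    calc A *ᵥ (1 : Fin d → ℝ) = (((1 - M) * N) * A) *ᵥ 1 := by rw [hNN', one_mul]
      _ = (1 - M) *ᵥ ((N * A) *ᵥ 1) := by rw [mul_assoc, ← Matrix.mulVec_mulVec]
      _ = (1 - M) *ᵥ 1 := by rw [h1]
  -- the matrix series
  have hS : HasSum (fun n : ℕ => (n : Matrix (Fin d) (Fin d) ℝ) * M ^ n)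
      (M * N ^ 2) := by
    have h := hasSum_coe_mul_geometric_of_norm_lt_one' (x := M) hR
    rw [← hN] at h
    exact h
  -- map through the continuous linear map X ↦ (X * A) *ᵥ 1
  let f : Matrix (Fin d) (Fin d) ℝ →ₗ[ℝ] (Fin d → ℝ) :=
    { toFun := fun X => (X * A) *ᵥ (1 : Fin d → ℝ)
      map_add' := fun X Y => by simp [add_mul, Matrix.add_mulVec]
      map_smul' := fun c X => by simp [Matrix.smul_mul, Matrix.smul_mulVec] }
  have hfc : Continuous f := f.continuous_of_finiteDimensional
  have hS2 := hS.map f.toAddMonoidHom hfc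
  have hterm : ∀ n : ℕ, f.toAddMonoidHom ((n : Matrix (Fin d) (Fin d) ℝ) * M ^ n)
      = n • ((M ^ n * (1 - Q * ζ')⁻¹ * P) *ᵥ (1 : Fin d → ℝ)) := by
    intro n
    show (((n : Matrix (Fin d) (Fin d) ℝ) * M ^ n) * A) *ᵥ (1 : Fin d → ℝ)
      = n • ((M ^ n * (1 - Q * ζ')⁻¹ * P) *ᵥ (1 : Fin d → ℝ))
    rw [← nsmul_eq_mul, smul_mul_assoc, Matrix.smul_mulVec, hA, mul_assoc]
  have hkey : M * N ^ 2 * (1 - M) = N * M := by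
    have h2 : N ^ 2 * (1 - M) = N := by rw [sq, mul_assoc, hNN, mul_one]
    rw [mul_assoc, h2, hcomm.eq]
  have hsum : f.toAddMonoidHom (M * N ^ 2)
      = ((1 - Q * ζ' - R)⁻¹ * R) *ᵥ (1 : Fin d → ℝ) := by
    show ((M * N ^ 2) * A) *ᵥ (1 : Fin d → ℝ) = _
    have hrhs : (1 - Q * ζ' - R)⁻¹ * R = N * M := by
      rw [hinvfact, mul_assoc, ← hM]
    rw [hrhs]
    calc ((M * N ^ 2) * A) *ᵥ (1 : Fin d → ℝ)
        = (M * N ^ 2) *ᵥ (A *ᵥ 1) := by rw [← Matrix.mulVec_mulVec]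
      _ = ((M * N ^ 2) * (1 - M)) *ᵥ 1 := by rw [hζ', Matrix.mulVec_mulVec]
      _ = (N * M) *ᵥ 1 := by rw [hkey]
  convert hS2 using 1
  · funext n
    exact (hterm n).symm
  · exact hsum.symm
end

section
/- Let ξ : ℕ → ℤ satisfy ξ(0) = 0 and |ξ(k+1) − ξ(k)| ≤ 1 for all k, and suppose there exists k with ξ(k) = 1; let T = min{k : ξ(k) = 1}. For n ∈ ℤ set U_n = #{k < T : ξ(k) = n, ξ(k+1) = n−1} (down-steps from level n before T) and Z_n = #{k < T : ξ(k) = n, ξ(k+1) = n} (lateral steps at level n before T). Then T = 1 + ∑_{n ≤ 0} (2·U_n + Z_n), where the sum over nonpositive integers n has only finitely many nonzero terms. -/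
/-- The pathwise content of Theorem 1.1(2): the first hitting time `T` of level `1` satisfies
`T = 1 + ∑_{n ≤ 0} (2 U_n + Z_n)`, with only finitely many nonzero terms, where `U_n` counts
down-steps from level `n` before `T` and `Z_n` counts lateral steps at level `n` before `T`. -/
theorem hitting_time_branching_decomposition (ξ : ℕ → ℤ) (h0 : ξ 0 = 0)
    (hstep : ∀ k, |ξ (k + 1) - ξ k| ≤ 1) (hex : ∃ k, ξ k = 1) (U Z : ℤ → ℕ)
    (hU : ∀ n : ℤ, U n =
      ((Finset.range (Nat.find hex)).filter fun k => ξ k = n ∧ ξ (k + 1) = n - 1).card)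
    (hZ : ∀ n : ℤ, Z n =
      ((Finset.range (Nat.find hex)).filter fun k => ξ k = n ∧ ξ (k + 1) = n).card) :
    {n : ℤ | n ≤ 0 ∧ 2 * U n + Z n ≠ 0}.Finite ∧
      Nat.find hex = 1 + ∑ᶠ (n : ℤ) (_ : n ≤ 0), (2 * U n + Z n) := by
  classical
  set T := Nat.find hex with hT
  have hTspec : ξ T = 1 := Nat.find_spec hex
  have hne : ∀ k < T, ξ k ≠ 1 := fun k hk => Nat.find_min hex hk
  -- before T, the path is ≤ 0
  have hle : ∀ k < T, ξ k ≤ 0 := by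
    intro k hk
    induction k with
    | zero => omega
    | succ m ih =>
      have hm := ih (by omega)
      have := hstep m
      rw [abs_le] at this
      have hne1 := hne (m + 1) hk
      omega
  -- partition of steps
  set Dset := (Finset.range T).filter (fun k => ξ (k + 1) = ξ k - 1) with hD
  set Lset := (Finset.range T).filter (fun k => ξ (k + 1) = ξ k) with hL
  set Aset := (Finset.range T).filter (fun k => ξ (k + 1) = ξ k + 1) with hA
  have htri : ∀ k, ξ (k + 1) = ξ k - 1 ∨ ξ (k + 1) = ξ k ∨ ξ (k + 1) = ξ k + 1 := by
    intro k; have := hstep k; rw [abs_le] at this; omega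
  have hDL : Disjoint Dset Lset := by
    rw [Finset.disjoint_left]
    intro k hk1 hk2
    simp only [hD, hL, Finset.mem_filter] at hk1 hk2
    omega
  have hADL : Disjoint Aset (Dset ∪ Lset) := by
    rw [Finset.disjoint_left]
    intro k hk1 hk2
    simp only [hA, hD, hL, Finset.mem_union, Finset.mem_filter] at hk1 hk2
    omega
  have hsplit : Finset.range T = Aset ∪ (Dset ∪ Lset) := by
    ext k
    simp only [hA, hD, hL, Finset.mem_union, Finset.mem_filter, Finset.mem_range]
    constructor
    · intro hk; rcases htri k with h | h | h <;> tauto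
    · tauto
  -- T = |A| + |D| + |L|
  have hcard : T = Aset.card + Dset.card + Lset.card := by
    have h1 : (Finset.range T).card = T := Finset.card_range T
    rw [← h1, hsplit, Finset.card_union_of_disjoint hADL, Finset.card_union_of_disjoint hDL]
    omega
  -- telescoping sum : |A| - |D| = 1
  have htel : (Aset.card : ℤ) - Dset.card = 1 := by
    have h1 : ∑ k ∈ Finset.range T, (ξ (k + 1) - ξ k) = 1 := by
      rw [Finset.sum_range_sub]; omega
    rw [hsplit, Finset.sum_union hADL, Finset.sum_union hDL] at h1
    have hAs : ∑ k ∈ Aset, (ξ (k + 1) - ξ k) = Aset.card := by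
      rw [Finset.sum_congr rfl (fun k hk => ?_), Finset.sum_const, nsmul_eq_mul, mul_one]
      simp only [hA, Finset.mem_filter] at hk; omega
    have hDs : ∑ k ∈ Dset, (ξ (k + 1) - ξ k) = -Dset.card := by
      rw [Finset.sum_congr rfl (fun k hk => ?_), Finset.sum_const, nsmul_eq_mul, mul_neg_one]
      simp only [hD, Finset.mem_filter] at hk; omega
    have hLs : ∑ k ∈ Lset, (ξ (k + 1) - ξ k) = 0 := by
      apply Finset.sum_eq_zero; intro k hk
      simp only [hL, Finset.mem_filter] at hk; omega
    omega
  -- the finite support finset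
  set S := ((Finset.range T).image ξ).filter (· ≤ 0) with hS
  -- any n with U n ≠ 0 or Z n ≠ 0 is in S (given n ≤ 0)
  have hsupp : ∀ n : ℤ, n ≤ 0 → 2 * U n + Z n ≠ 0 → n ∈ S := by
    intro n hn0 hn
    have : U n ≠ 0 ∨ Z n ≠ 0 := by omega
    have hmem : ∃ k ∈ Finset.range T, ξ k = n := by
      rcases this with h | h
      · rw [hU n, Finset.card_ne_zero] at h
        obtain ⟨k, hk⟩ := h.exists_mem
        simp only [Finset.mem_filter] at hk
        exact ⟨k, hk.1, hk.2.1⟩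
      · rw [hZ n, Finset.card_ne_zero] at h
        obtain ⟨k, hk⟩ := h.exists_mem
        simp only [Finset.mem_filter] at hk
        exact ⟨k, hk.1, hk.2.1⟩
    obtain ⟨k, hk1, hk2⟩ := hmem
    simp only [hS, Finset.mem_filter, Finset.mem_image]
    exact ⟨⟨k, hk1, hk2⟩, hn0⟩
  have hfin : {n : ℤ | n ≤ 0 ∧ 2 * U n + Z n ≠ 0}.Finite := by
    apply Set.Finite.subset S.finite_toSet
    intro n hn
    exact hsupp n hn.1 hn.2
  refine ⟨hfin, ?_⟩
  -- sum over S of U = |Dset|, sum over S of Z = |Lset|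
  have hUsum : ∑ n ∈ S, U n = Dset.card := by
    rw [Finset.card_eq_sum_card_fiberwise (f := ξ) (t := S) ?_]
    · apply Finset.sum_congr rfl
      intro n _
      rw [hU n]
      congr 1
      ext k
      simp only [hD, Finset.filter_filter, Finset.mem_filter, Finset.mem_range]
      omega
    · intro k hk
      simp only [hD, Finset.mem_coe, Finset.mem_filter, Finset.mem_range] at hk
      simp only [hS, Finset.mem_coe, Finset.mem_filter, Finset.mem_image]
      exact ⟨⟨k, Finset.mem_range.mpr hk.1, rfl⟩, hle k hk.1⟩
  have hZsum : ∑ n ∈ S, Z n = Lset.card := by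
    rw [Finset.card_eq_sum_card_fiberwise (f := ξ) (t := S) ?_]
    · apply Finset.sum_congr rfl
      intro n _
      rw [hZ n]
      congr 1
      ext k
      simp only [hL, Finset.filter_filter, Finset.mem_filter, Finset.mem_range]
      omega
    · intro k hk
      simp only [hL, Finset.mem_coe, Finset.mem_filter, Finset.mem_range] at hk
      simp only [hS, Finset.mem_coe, Finset.mem_filter, Finset.mem_image]
      exact ⟨⟨k, Finset.mem_range.mpr hk.1, rfl⟩, hle k hk.1⟩
  have hfs : ∑ᶠ (n : ℤ) (_ : n ≤ 0), (2 * U n + Z n) = ∑ n ∈ S, (2 * U n + Z n) := by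
    apply finsum_mem_eq_sum_of_subset
    · intro n hn
      exact hsupp n hn.1 hn.2
    · intro n hn
      simp only [hS, Finset.coe_filter, Finset.mem_coe] at hn
      exact hn.2
  rw [hfs, Finset.sum_add_distrib, ← Finset.mul_sum, hUsum, hZsum]
  omega
end
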